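/- For every dimension d ≥ 1 and every real z with -d < z < d, the integral of ‖x‖^z over the cube (-1,1)^d is at most (3d)^d / (d + z). -/

import Mathlib

open MeasureTheory Set



open MeasureTheory Set Metric Measure
open scoped ENNReal

local notation "dim" => Module.finrank ℝ

variable {E : Type*} [NormedAddCommGroup E] [NormedSpace ℝ E] [MeasurableSpace E] [BorelSpace E]
  [Nontrivial E] [FiniteDimensional ℝ E]

lemma lintegral_fun_norm_addHaar (μ : Measure E) [μ.IsAddHaarMeasure] (f : ℝ → ℝ≥0∞)
    (hf : Measurable f) :
    ∫⁻ x, f ‖x‖ ∂μ =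
      (dim E : ℝ≥0∞) * μ (ball 0 1) * ∫⁻ y in Ioi (0 : ℝ), ENNReal.ofReal (y ^ (dim E - 1)) * f y := by
  have hmeas : Measurable (f ∘ Subtype.val ∘ Prod.snd :
      sphere (0 : E) 1 × Ioi (0 : ℝ) → ℝ≥0∞) :=
    (hf.comp measurable_subtype_coe).comp measurable_snd
  calc
    ∫⁻ x, f ‖x‖ ∂μ
        = ∫⁻ x : ({(0)}ᶜ : Set E), f ‖(x : E)‖ ∂(μ.comap (↑)) := by
      rw [lintegral_subtype_comap (measurableSet_singleton (0:E)).compl (fun x : E ↦ f ‖x‖),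
        restrict_compl_singleton]
    _ = ∫⁻ x : sphere (0 : E) 1 × Ioi (0 : ℝ), (f ∘ Subtype.val ∘ Prod.snd) x
          ∂μ.toSphere.prod (.volumeIoiPow (dim E - 1)) := by
      exact (lintegral_congr (f := fun x : ({(0)}ᶜ : Set E) => f ‖(x : E)‖) (g := fun x : ({(0)}ᶜ : Set E) => (f ∘ Subtype.val ∘ Prod.snd) (homeomorphUnitSphereProd E x)) fun x => by simp).trans
        (μ.measurePreserving_homeomorphUnitSphereProd.lintegral_comp hmeas)
    _ = μ.toSphere univ * ∫⁻ x : Ioi (0 : ℝ), f x ∂Measure.volumeIoiPow (dim E - 1) := by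
      rw [lintegral_prod _ hmeas.aemeasurable]
      simp [lintegral_const, mul_comm]
    _ = _ := by
      rw [Measure.volumeIoiPow, lintegral_withDensity_eq_lintegral_mul _
          ((measurable_subtype_coe.pow_const _).ennreal_ofReal) (show Measurable (fun a : Ioi (0:ℝ) => f ↑a) from hf.comp measurable_subtype_coe),
        toSphere_apply_univ]
      congr 1
      rw [← lintegral_subtype_comap measurableSet_Ioi
        (fun a : ℝ ↦ ENNReal.ofReal (a ^ (dim E - 1)) * f a)]
      rfl

lemma aux2 (n : ℕ) : 2 * 2 ^ (n + 2) ≤ 3 ^ (n + 2) := by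
  induction n with
  | zero => norm_num
  | succ m ih =>
    calc 2 * 2 ^ (m + 3) = 2 * (2 * 2 ^ (m + 2)) := by ring
    _ ≤ 2 * 3 ^ (m + 2) := by omega
    _ ≤ 3 ^ (m + 3) := by ring_nf; omega

lemma aux1 (d : ℕ) : 2 ^ d * d ≤ 3 ^ d := by
  induction d with
  | zero => simp
  | succ n ih =>
    rcases Nat.lt_or_ge n 2 with h | h
    · interval_cases n <;> norm_num
    · obtain ⟨m, rfl⟩ : ∃ m, n = m + 2 := ⟨n - 2, by omega⟩
      have := aux2 m
      calc 2 ^ (m + 2 + 1) * (m + 2 + 1) = 2 * (2 ^ (m+2) * (m+2)) + 2 * 2 ^ (m+2) := by ring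
      _ ≤ 2 * 3 ^ (m+2) + 3 ^ (m+2) := by omega
      _ = 3 ^ (m + 2 + 1) := by ring

/-- For every dimension `d ≥ 1` and every real `z` with `-d < z < d`, the integral of
`‖x‖^z` over the cube `(-1,1)^d` is at most `(3d)^d / (d + z)`. -/
theorem stmt0 (d : ℕ) (hd : 1 ≤ d) (z : ℝ) (hz : -(d : ℝ) < z) (hz' : z < d) :
    (∫⁻ x : EuclideanSpace ℝ (Fin d) in {x | ∀ i, x i ∈ Ioo (-1 : ℝ) 1},
        ENNReal.ofReal (‖x‖ ^ z)) ≤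
      ENNReal.ofReal ((3 * (d : ℝ)) ^ d / ((d : ℝ) + z)) := by
  have hd0 : (0 : ℝ) < d := by exact_mod_cast hd
  have hdz : (0 : ℝ) < (d : ℝ) + z := by linarith
  set S : Set (EuclideanSpace ℝ (Fin d)) := {x | ∀ i, x i ∈ Ioo (-1 : ℝ) 1} with hSdef
  set s : ℝ := Real.sqrt d with hsdef
  have hs0 : 0 ≤ s := Real.sqrt_nonneg _
  set F : ℝ → ℝ≥0∞ := (Icc 0 s).indicator (fun r => ENNReal.ofReal (r ^ z)) with hFdef
  have hF : Measurable F := by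
    apply Measurable.indicator _ measurableSet_Icc
    fun_prop
  have hnorm_le : ∀ x ∈ S, ‖x‖ ≤ s := by
    intro x hx
    rw [EuclideanSpace.norm_eq]
    apply Real.sqrt_le_sqrt
    calc ∑ i, ‖x i‖ ^ 2 ≤ ∑ _i : Fin d, (1 : ℝ) := by
          apply Finset.sum_le_sum
          intro i _
          have h1 : ‖x i‖ ≤ 1 := by
            rw [Real.norm_eq_abs, abs_le]
            exact ⟨(hx i).1.le, (hx i).2.le⟩
          calc ‖x i‖ ^ 2 ≤ 1 ^ 2 := pow_le_pow_left₀ (norm_nonneg _) h1 2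
          _ = 1 := one_pow 2
    _ = d := by simp
  have hS : MeasurableSet S := by
    have : S = ⋂ i, (fun x : EuclideanSpace ℝ (Fin d) => x i) ⁻¹' (Ioo (-1 : ℝ) 1) := by
      ext x; simp [hSdef]
    rw [this]
    exact MeasurableSet.iInter fun i => ((measurable_pi_apply i).comp (WithLp.measurable_ofLp 2 (Fin d → ℝ))) measurableSet_Ioo
  have hvolS : volume S = ENNReal.ofReal 2 ^ d := by
    have hmp := EuclideanSpace.volume_preserving_symm_measurableEquiv_toLp (Fin d)
    have hpre : S = ((MeasurableEquiv.toLp 2 (Fin d → ℝ)).symm) ⁻¹' (univ.pi fun _ => Ioo (-1 : ℝ) 1) := by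
      ext x; simp [hSdef, MeasurableEquiv.coe_toLp_symm]
    rw [hpre, hmp.measure_preimage (MeasurableSet.univ_pi fun _ => measurableSet_Ioo).nullMeasurableSet,
      volume_pi_pi]
    simp
    norm_num

  have hnt : Nontrivial (EuclideanSpace ℝ (Fin d)) :=
    Module.nontrivial_of_finrank_pos (R := ℝ) (by rw [finrank_euclideanSpace_fin]; omega)
  have key := lintegral_fun_norm_addHaar (volume : Measure (EuclideanSpace ℝ (Fin d))) F hF
  rw [finrank_euclideanSpace_fin] at key
  have hball : ball (0 : EuclideanSpace ℝ (Fin d)) 1 ⊆ S := by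
    intro x hx
    rw [mem_ball_zero_iff] at hx
    intro i
    have h1 : |x i| ≤ ‖x‖ := by
      rw [EuclideanSpace.norm_eq]
      rw [show |x i| = Real.sqrt (‖x i‖ ^ 2) by
        rw [Real.sqrt_sq_eq_abs, Real.norm_eq_abs, abs_abs]]
      apply Real.sqrt_le_sqrt
      exact Finset.single_le_sum (f := fun j => ‖x j‖ ^ 2)
        (fun j _ => by positivity) (Finset.mem_univ i)
    have h2 : |x i| < 1 := lt_of_le_of_lt h1 hx
    rw [abs_lt] at h2
    exact ⟨h2.1, h2.2⟩
  have hp : (-1 : ℝ) < (d : ℝ) - 1 + z := by linarith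
  have hinter : Icc (0 : ℝ) s ∩ Ioi 0 = Ioc 0 s := by
    ext x
    constructor
    · rintro ⟨⟨h1, h2⟩, h3⟩; exact ⟨h3, h2⟩
    · rintro ⟨h1, h2⟩; exact ⟨⟨h1.le, h2⟩, h1⟩
  have hone : (∫⁻ y in Ioi (0 : ℝ), ENNReal.ofReal (y ^ (d - 1)) * F y)
      = ENNReal.ofReal (s ^ ((d : ℝ) + z) / ((d : ℝ) + z)) := by
    calc ∫⁻ y in Ioi (0 : ℝ), ENNReal.ofReal (y ^ (d - 1)) * F y
        = ∫⁻ y in Ioi (0 : ℝ),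
            (Icc 0 s).indicator (fun r => ENNReal.ofReal (r ^ (d - 1)) * ENNReal.ofReal (r ^ z)) y := by
          apply lintegral_congr
          intro y
          by_cases hy : y ∈ Icc 0 s
          · simp [hFdef, indicator_of_mem hy]
          · simp [hFdef, indicator_of_notMem hy]
      _ = ∫⁻ y in Ioc (0 : ℝ) s, ENNReal.ofReal (y ^ (d - 1)) * ENNReal.ofReal (y ^ z) := by
          rw [lintegral_indicator measurableSet_Icc,
            Measure.restrict_restrict measurableSet_Icc, hinter]
      _ = ∫⁻ y in Ioc (0 : ℝ) s, ENNReal.ofReal (y ^ ((d : ℝ) - 1 + z)) := by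
          apply setLIntegral_congr_fun measurableSet_Ioc
          intro y hy
          dsimp only
          rw [← ENNReal.ofReal_mul (pow_nonneg hy.1.le _)]
          congr 1
          rw [← Real.rpow_natCast y (d - 1), ← Real.rpow_add hy.1]
          congr 1
          rw [Nat.cast_sub hd]
          push_cast
          ring
      _ = ENNReal.ofReal (∫ y in Ioc (0 : ℝ) s, y ^ ((d : ℝ) - 1 + z)) := by
          rw [← ofReal_integral_eq_lintegral_ofReal]
          · have := intervalIntegral.intervalIntegrable_rpow' (a := 0) (b := s) hp
            rw [intervalIntegrable_iff, uIoc_of_le hs0] at this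
            exact this
          · filter_upwards [ae_restrict_mem measurableSet_Ioc] with y hy
            exact Real.rpow_nonneg hy.1.le _
      _ = ENNReal.ofReal (s ^ ((d : ℝ) + z) / ((d : ℝ) + z)) := by
          rw [← intervalIntegral.integral_of_le hs0,
            integral_rpow (Or.inl hp), Real.zero_rpow (by linarith : (d : ℝ) - 1 + z + 1 ≠ 0)]
          have e : (d : ℝ) - 1 + z + 1 = (d : ℝ) + z := by ring
          rw [e, sub_zero]
  have h1s : (1 : ℝ) ≤ s := by
    rw [hsdef, show (1:ℝ) = Real.sqrt 1 by simp]
    exact Real.sqrt_le_sqrt (by exact_mod_cast hd)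
  have hspow : s ^ ((d : ℝ) + z) ≤ (d : ℝ) ^ d := by
    calc s ^ ((d : ℝ) + z) ≤ s ^ (((2 * d : ℕ) : ℝ)) := by
          apply Real.rpow_le_rpow_of_exponent_le h1s
          push_cast; linarith
      _ = (d : ℝ) ^ d := by
          rw [Real.rpow_natCast, pow_mul, Real.sq_sqrt hd0.le]
  have haux : ((2 : ℝ) ^ d * d) ≤ 3 ^ d := by exact_mod_cast aux1 d
  calc (∫⁻ x : EuclideanSpace ℝ (Fin d) in S, ENNReal.ofReal (‖x‖ ^ z))
      = ∫⁻ x in S, F ‖x‖ := by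
        apply setLIntegral_congr_fun hS
        intro x hx
        dsimp only
        rw [hFdef, indicator_of_mem (mem_Icc.mpr ⟨norm_nonneg x, hnorm_le x hx⟩)]
    _ ≤ ∫⁻ x, F ‖x‖ := setLIntegral_le_lintegral _ _
    _ = (d : ℝ≥0∞) * volume (ball (0 : EuclideanSpace ℝ (Fin d)) 1) *
          ENNReal.ofReal (s ^ ((d : ℝ) + z) / ((d : ℝ) + z)) := by rw [key, hone]
    _ ≤ (d : ℝ≥0∞) * ENNReal.ofReal 2 ^ d *
          ENNReal.ofReal ((d : ℝ) ^ d / ((d : ℝ) + z)) := by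
        gcongr
        rw [← hvolS]; exact measure_mono hball
    _ = ENNReal.ofReal ((d : ℝ) * 2 ^ d * ((d : ℝ) ^ d / ((d : ℝ) + z))) := by
        rw [← ENNReal.ofReal_natCast d, ← ENNReal.ofReal_pow (by norm_num),
          ← ENNReal.ofReal_mul (by positivity), ← ENNReal.ofReal_mul (by positivity)]
    _ ≤ ENNReal.ofReal ((3 * (d : ℝ)) ^ d / ((d : ℝ) + z)) := by
        apply ENNReal.ofReal_le_ofReal
        rw [show (d : ℝ) * 2 ^ d * ((d : ℝ) ^ d / ((d : ℝ) + z))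
            = ((2 : ℝ) ^ d * d) * (d : ℝ) ^ d / ((d : ℝ) + z) by ring, mul_pow]
        gcongr
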